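/- For n = 3 and a ∈ B³, the function U_a(x) = √((|a|²|x|² - 2a·x + 1)/(1-|a|²)) - ((1-|x|²)/4)√((1-|a|²)/(|a|²|x|² - 2a·x + 1)) is biharmonic on the closed unit ball B³, is positive there, and satisfies ∂U_a/∂r = (1/2) U_a on S². -/

import Mathlib

open scoped BigOperators RealInnerProductSpace

/-- The Euclidean Laplacian of a function on `ℝⁿ` (as `EuclideanSpace`). -/
noncomputable def lapl {n : ℕ} (f : EuclideanSpace ℝ (Fin n) → ℝ)
    (x : EuclideanSpace ℝ (Fin n)) : ℝ :=
  ∑ i : Fin n, fderiv ℝ (fun y => fderiv ℝ f y (EuclideanSpace.single i 1)) x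
    (EuclideanSpace.single i 1)

noncomputable section Stmt17Aux

abbrev E3 := EuclideanSpace ℝ (Fin 3)

def Qi (a x : E3) : ℝ := ‖a‖^2 * ⟪x,x⟫ - 2*⟪a,x⟫ + 1
def Pf (a x : E3) : ℝ := Real.sqrt (Qi a x)
def Bf (a x : E3) : E3 := ‖a‖^2 • x - a
def scn (a : E3) : ℝ := Real.sqrt (1 - ‖a‖^2)
def kk (a : E3) : ℝ := 2*‖a‖^2*(scn a)⁻¹ + (3/2)*scn a
def mfun (a x : E3) : ℝ := ‖a‖^2*⟪x,x⟫ - ⟪a,x⟫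
def UU (a x : E3) : ℝ :=
  (scn a)⁻¹ * Pf a x + ((scn a/4) * (⟪x,x⟫ - 1)) * (Pf a x * (Qi a x)⁻¹)
def c1 (a x : E3) : ℝ :=
  (scn a)⁻¹ * (Pf a x * (Qi a x)⁻¹) - (scn a/4) * (⟪x,x⟫-1) * Pf a x * ((Qi a x)⁻¹*(Qi a x)⁻¹)
def c2 (a x : E3) : ℝ := (scn a/2) * (Pf a x * (Qi a x)⁻¹)
def DUU (a x : E3) : E3 →L[ℝ] ℝ := c1 a x • innerSL ℝ (Bf a x) + c2 a x • innerSL ℝ x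
def Vf (a : E3) (v x : E3) : ℝ := c1 a x * ⟪Bf a x, v⟫ + c2 a x * ⟪x, v⟫
def Hi (a x : E3) : ℝ :=
  kk a * (Pf a x * (Qi a x)⁻¹) - (scn a * mfun a x) * (Pf a x * ((Qi a x)⁻¹*(Qi a x)⁻¹))
def e1 (a x : E3) : ℝ :=
  (-(kk a)) * (Pf a x * ((Qi a x)⁻¹*(Qi a x)⁻¹))
    + ((3*scn a) * mfun a x) * (Pf a x * ((Qi a x)⁻¹*(Qi a x)⁻¹*(Qi a x)⁻¹))
def e2 (a x : E3) : ℝ := (-(2*‖a‖^2*scn a)) * (Pf a x * ((Qi a x)⁻¹*(Qi a x)⁻¹))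
def e3 (a x : E3) : ℝ := scn a * (Pf a x * ((Qi a x)⁻¹*(Qi a x)⁻¹))
def DHi (a x : E3) : E3 →L[ℝ] ℝ :=
  e1 a x • innerSL ℝ (Bf a x) + e2 a x • innerSL ℝ x + e3 a x • innerSL ℝ a
def WH (a : E3) (v x : E3) : ℝ := e1 a x * ⟪Bf a x, v⟫ + e2 a x * ⟪x, v⟫ + e3 a x * ⟪a, v⟫

variable {a x : E3}

lemma Qi_eq (a x : E3) : Qi a x = ‖a‖^2*‖x‖^2 - 2*⟪a,x⟫ + 1 := by
  unfold Qi; rw [real_inner_self_eq_norm_sq]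

lemma Qi_pos (ha : ‖a‖ < 1) (hx : ‖x‖ ≤ 1) : 0 < Qi a x := by
  have key : Qi a x = (1-‖a‖^2)*(1-‖x‖^2) + ‖x-a‖^2 := by
    rw [Qi_eq, norm_sub_sq_real, real_inner_comm]; ring
  by_cases hxa : x = a
  · subst hxa
    have h0 : (0:ℝ) < 1-‖x‖^2 := by nlinarith [norm_nonneg x]
    have : (0:ℝ) < (1-‖x‖^2)*(1-‖x‖^2) := mul_pos h0 h0
    have h2 : (0:ℝ) ≤ ‖x-x‖^2 := by positivity
    rw [key]; nlinarith
  · have h2 : 0 < ‖x-a‖^2 := pow_pos (norm_sub_pos_iff.mpr hxa) 2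
    have h1 : 0 ≤ (1-‖a‖^2)*(1-‖x‖^2) := by
      apply mul_nonneg <;> nlinarith [norm_nonneg a, norm_nonneg x]
    rw [key]; linarith

lemma c_pos (ha : ‖a‖ < 1) : 0 < 1 - ‖a‖^2 := by nlinarith [norm_nonneg a]
lemma scn_pos (ha : ‖a‖ < 1) : 0 < scn a := Real.sqrt_pos.mpr (c_pos ha)
lemma scn_sq (ha : ‖a‖ < 1) : scn a ^ 2 = 1 - ‖a‖^2 := Real.sq_sqrt (c_pos ha).le
lemma Pf_pos (hx : 0 < Qi a x) : 0 < Pf a x := Real.sqrt_pos.mpr hx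
lemma Pf_sq (hx : 0 < Qi a x) : Pf a x ^ 2 = Qi a x := Real.sq_sqrt hx.le

lemma continuous_Qi (a : E3) : Continuous (Qi a) := by
  unfold Qi
  exact ((continuous_const.mul (continuous_id.inner continuous_id)).sub
    (continuous_const.mul (continuous_const.inner continuous_id))).add continuous_const

lemma ev_pos (hx : 0 < Qi a x) : ∀ᶠ y in nhds x, 0 < Qi a y :=
  ((continuous_Qi a).tendsto x).eventually (eventually_gt_nhds hx)

lemma lapl_congr {f g : E3 → ℝ} (h : f =ᶠ[nhds x] g) : lapl f x = lapl g x := by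
  unfold lapl
  refine Finset.sum_congr rfl fun i _ => ?_
  have h2 : (fun y => fderiv ℝ f y (EuclideanSpace.single i 1))
      =ᶠ[nhds x] (fun y => fderiv ℝ g y (EuclideanSpace.single i 1)) :=
    (h.fderiv (𝕜 := ℝ)).mono fun y hy => by
      show fderiv ℝ f y (EuclideanSpace.single i 1) = fderiv ℝ g y (EuclideanSpace.single i 1)
      rw [hy]
  rw [h2.fderiv_eq]

lemma sum_inner_single (u w : E3) :
    ∑ i : Fin 3, ⟪u, EuclideanSpace.single i 1⟫ * ⟪w, EuclideanSpace.single i 1⟫ = ⟪u, w⟫ := by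
  simp [EuclideanSpace.inner_single_right, PiLp.inner_apply, RCLike.inner_apply,
    starRingEnd_apply, mul_comm]

lemma sum_single_single :
    ∑ i : Fin 3, (⟪(EuclideanSpace.single i 1 : E3), EuclideanSpace.single i 1⟫ : ℝ) = 3 := by
  simp [EuclideanSpace.inner_single_left, EuclideanSpace.single_apply, Fin.sum_univ_three]

lemma hBB (a x : E3) : ⟪Bf a x, Bf a x⟫ = ‖a‖^2*‖a‖^2*⟪x,x⟫ - 2*‖a‖^2*⟪a,x⟫ + ‖a‖^2 := by
  simp only [Bf, inner_sub_left, inner_sub_right, real_inner_smul_left,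
    real_inner_smul_right, smul_eq_mul]
  rw [show (⟪a,a⟫:ℝ) = ‖a‖^2 from real_inner_self_eq_norm_sq a, real_inner_comm x a]
  ring

lemma hxB (a x : E3) : ⟪x, Bf a x⟫ = ‖a‖^2*⟪x,x⟫ - ⟪a,x⟫ := by
  simp only [Bf, inner_sub_right, real_inner_smul_right, real_inner_comm x a, smul_eq_mul]

lemma haB (a x : E3) : ⟪a, Bf a x⟫ = ‖a‖^2*⟪a,x⟫ - ‖a‖^2 := by
  simp only [Bf, inner_sub_right, real_inner_smul_right, smul_eq_mul]
  rw [show (⟪a,a⟫:ℝ) = ‖a‖^2 from real_inner_self_eq_norm_sq a]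

lemma hasFDerivAt_Qi (a x : E3) :
    HasFDerivAt (Qi a) ((2:ℝ) • (innerSL ℝ (Bf a x))) x := by
  have h1 : HasFDerivAt (fun y : E3 => ⟪y,y⟫) _ x :=
    (hasFDerivAt_id x).inner ℝ (hasFDerivAt_id x)
  have h2 : HasFDerivAt (fun y : E3 => ⟪a,y⟫) _ x :=
    (hasFDerivAt_const a x).inner ℝ (hasFDerivAt_id x)
  have h := ((h1.const_mul (‖a‖^2)).sub (h2.const_mul 2)).add_const 1
  refine h.congr_fderiv ?_
  ext v
  simp [Bf, fderivInnerCLM_apply, real_inner_smul_left, inner_sub_left,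
    real_inner_comm x v]
  ring

lemma hasFDerivAt_Pf (a : E3) {x : E3} (hx : 0 < Qi a x) :
    HasFDerivAt (Pf a) ((Pf a x / Qi a x) • (innerSL ℝ (Bf a x))) x := by
  have h := (Real.hasDerivAt_sqrt hx.ne').comp_hasFDerivAt x (hasFDerivAt_Qi a x)
  refine h.congr_fderiv ?_
  ext v
  have hp : Pf a x ^ 2 = Qi a x := Pf_sq hx
  have hp0 : Pf a x ≠ 0 := (Pf_pos hx).ne'
  simp only [ContinuousLinearMap.smul_apply, innerSL_apply_apply, smul_eq_mul]
  rw [show Real.sqrt (Qi a x) = Pf a x from rfl, ← hp]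
  field_simp

lemma U_eq_UU (ha : ‖a‖ < 1) (hx : 0 < Qi a x) :
    Real.sqrt ((‖a‖ ^ 2 * ‖x‖ ^ 2 - 2 * ⟪a, x⟫ + 1) / (1 - ‖a‖ ^ 2)) -
        (1 - ‖x‖ ^ 2) / 4 *
          Real.sqrt ((1 - ‖a‖ ^ 2) / (‖a‖ ^ 2 * ‖x‖ ^ 2 - 2 * ⟪a, x⟫ + 1))
      = UU a x := by
  have h1 : ‖a‖ ^ 2 * ‖x‖ ^ 2 - 2 * ⟪a, x⟫ + 1 = Qi a x := (Qi_eq a x).symm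
  rw [h1, Real.sqrt_div hx.le, Real.sqrt_div (c_pos ha).le]
  rw [show Real.sqrt (Qi a x) = Pf a x from rfl,
     show Real.sqrt (1-‖a‖^2) = scn a from rfl]
  have hp : Pf a x ^ 2 = Qi a x := Pf_sq hx
  have hp0 : Pf a x ≠ 0 := (Pf_pos hx).ne'
  have hs0 : scn a ≠ 0 := (scn_pos ha).ne'
  unfold UU
  rw [← hp, real_inner_self_eq_norm_sq]
  field_simp
  ring

lemma hasFDerivAt_UU (hx : 0 < Qi a x) : HasFDerivAt (UU a) (DUU a x) x := by
  have hss : HasFDerivAt (fun y : E3 => ⟪y,y⟫) _ x :=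
    (hasFDerivAt_id x).inner ℝ (hasFDerivAt_id x)
  have hP := hasFDerivAt_Pf a hx
  have hQ := hasFDerivAt_Qi a x
  have hQinv : HasFDerivAt (fun y => (Qi a y)⁻¹) _ x :=
    (hasDerivAt_inv hx.ne').comp_hasFDerivAt x hQ
  have h := (hP.const_mul ((scn a)⁻¹)).add
    (((hss.sub_const 1).const_mul (scn a/4)).mul (hP.mul hQinv))
  refine (h.congr_fderiv ?_ : HasFDerivAt (UU a) _ x)
  ext v
  have hp0 : Pf a x ≠ 0 := (Pf_pos hx).ne'
  simp only [ContinuousLinearMap.add_apply, ContinuousLinearMap.smul_apply, Pi.mul_apply,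
    innerSL_apply_apply, smul_eq_mul, ContinuousLinearMap.coe_comp', Function.comp_apply,
    ContinuousLinearMap.prod_apply, fderivInnerCLM_apply, ContinuousLinearMap.coe_id',
    id_eq, DUU, c1, c2, real_inner_comm v x]
  field_simp
  ring

lemma DUU_apply (a x v : E3) : DUU a x v = Vf a v x := by
  simp [DUU, Vf, ContinuousLinearMap.add_apply, ContinuousLinearMap.smul_apply,
    innerSL_apply_apply, smul_eq_mul]

set_option maxHeartbeats 1000000 in
lemma lapl_V_sum (ha : ‖a‖ < 1) (hx : 0 < Qi a x) :
    ∑ i : Fin 3, fderiv ℝ (fun y => Vf a (EuclideanSpace.single i 1) y) x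
      (EuclideanSpace.single i 1) = Hi a x := by
  have hq0 : Qi a x ≠ 0 := hx.ne'
  have hp0 : Pf a x ≠ 0 := (Pf_pos hx).ne'
  have hs0 : scn a ≠ 0 := (scn_pos ha).ne'
  have hQ := hasFDerivAt_Qi a x
  have hP := hasFDerivAt_Pf a hx
  have hss : HasFDerivAt (fun y : E3 => ⟪y,y⟫) _ x :=
    (hasFDerivAt_id x).inner ℝ (hasFDerivAt_id x)
  have hQinv : HasFDerivAt (fun y => (Qi a y)⁻¹) _ x :=
    (hasDerivAt_inv hx.ne').comp_hasFDerivAt x hQ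
  have hQ2inv := HasFDerivAt.mul (𝕜 := ℝ) hQinv hQinv
  have hBf : HasFDerivAt (Bf a) ((‖a‖^2 : ℝ) • ContinuousLinearMap.id ℝ E3) x :=
    ((hasFDerivAt_id (𝕜 := ℝ) x).const_smul (‖a‖^2)).sub_const a
  have hc1 : HasFDerivAt (c1 a) _ x :=
    ((hP.mul hQinv).const_mul ((scn a)⁻¹)).sub
      ((((hss.sub_const 1).const_mul (scn a/4)).mul hP).mul hQ2inv)
  have hc2 : HasFDerivAt (c2 a) _ x := (hP.mul hQinv).const_mul (scn a/2)
  have hsum : ∀ v : E3, HasFDerivAt (fun y => Vf a v y) _ x := fun v =>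
    (hc1.mul (hBf.inner ℝ (hasFDerivAt_const v x))).add
      (hc2.mul ((hasFDerivAt_id x).inner ℝ (hasFDerivAt_const v x)))
  have summand : ∀ v : E3, fderiv ℝ (fun y => Vf a v y) x v
      = (‖a‖^2 * c1 a x + c2 a x) * ⟪v,v⟫
        + (-(scn a)⁻¹ * Pf a x * ((Qi a x)⁻¹*(Qi a x)⁻¹)
           + (3*scn a/4)*(⟪x,x⟫-1)*Pf a x*((Qi a x)⁻¹*(Qi a x)⁻¹*(Qi a x)⁻¹))
          * (⟪Bf a x, v⟫ * ⟪Bf a x, v⟫)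
        + (-(scn a) * Pf a x * ((Qi a x)⁻¹*(Qi a x)⁻¹)) * (⟪x, v⟫ * ⟪Bf a x, v⟫) := by
    intro v
    rw [(hsum v).fderiv]
    simp only [ContinuousLinearMap.add_apply, ContinuousLinearMap.smul_apply, Pi.mul_apply,
      ContinuousLinearMap.sub_apply, ContinuousLinearMap.coe_comp', Function.comp_apply,
      ContinuousLinearMap.prod_apply, ContinuousLinearMap.coe_id', id_eq,
      fderivInnerCLM_apply, innerSL_apply_apply, smul_eq_mul, ContinuousLinearMap.coe_smul',
      Pi.smul_apply, ContinuousLinearMap.neg_apply, ContinuousLinearMap.zero_apply,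
      real_inner_comm v x, real_inner_comm v (Bf a x), inner_zero_right, inner_zero_left,
      real_inner_smul_left]
    ring
  calc ∑ i : Fin 3, fderiv ℝ (fun y => Vf a (EuclideanSpace.single i 1) y) x
        (EuclideanSpace.single i 1)
      = ∑ i : Fin 3,
        ((‖a‖^2 * c1 a x + c2 a x) * ⟪(EuclideanSpace.single i 1 : E3), EuclideanSpace.single i 1⟫
        + (-(scn a)⁻¹ * Pf a x * ((Qi a x)⁻¹*(Qi a x)⁻¹)
           + (3*scn a/4)*(⟪x,x⟫-1)*Pf a x*((Qi a x)⁻¹*(Qi a x)⁻¹*(Qi a x)⁻¹))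
          * (⟪Bf a x, EuclideanSpace.single i 1⟫ * ⟪Bf a x, EuclideanSpace.single i 1⟫)
        + (-(scn a) * Pf a x * ((Qi a x)⁻¹*(Qi a x)⁻¹))
          * (⟪x, EuclideanSpace.single i 1⟫ * ⟪Bf a x, EuclideanSpace.single i 1⟫)) :=
        Finset.sum_congr rfl fun i _ => summand _
    _ = Hi a x := by
        simp only [Finset.sum_add_distrib, ← Finset.mul_sum, sum_inner_single,
          sum_single_single]
        rw [hBB, hxB]
        simp only [Hi, c1, c2, kk, mfun, Qi] at hq0 ⊢
        set s := (⟪x,x⟫:ℝ) with hsdef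
        set t := (⟪a,x⟫:ℝ) with htdef
        field_simp
        ring

lemma hasFDerivAt_Hi (ha : ‖a‖ < 1) (hx : 0 < Qi a x) :
    HasFDerivAt (Hi a) (DHi a x) x := by
  have hss : HasFDerivAt (fun y : E3 => ⟪y,y⟫) _ x :=
    (hasFDerivAt_id x).inner ℝ (hasFDerivAt_id x)
  have hP := hasFDerivAt_Pf a hx
  have hQ := hasFDerivAt_Qi a x
  have hQinv : HasFDerivAt (fun y => (Qi a y)⁻¹) _ x :=
    (hasDerivAt_inv hx.ne').comp_hasFDerivAt x hQ
  have hQ2inv := HasFDerivAt.mul (𝕜 := ℝ) hQinv hQinv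
  have hm : HasFDerivAt (mfun a) _ x :=
    (hss.const_mul (‖a‖^2)).sub ((hasFDerivAt_const a x).inner ℝ (hasFDerivAt_id x))
  have h := ((hP.mul hQinv).const_mul (kk a)).sub
    ((hm.const_mul (scn a)).mul (hP.mul hQ2inv))
  refine (h.congr_fderiv ?_ : HasFDerivAt (Hi a) _ x)
  ext v
  have hq0 : Qi a x ≠ 0 := hx.ne'
  simp only [ContinuousLinearMap.add_apply, ContinuousLinearMap.smul_apply, Pi.mul_apply,
    ContinuousLinearMap.sub_apply, ContinuousLinearMap.coe_comp', Function.comp_apply,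
    ContinuousLinearMap.prod_apply, fderivInnerCLM_apply, ContinuousLinearMap.coe_id',
    id_eq, innerSL_apply_apply, smul_eq_mul, ContinuousLinearMap.coe_smul', Pi.smul_apply,
    ContinuousLinearMap.neg_apply, ContinuousLinearMap.zero_apply, inner_zero_right, inner_zero_left,
    DHi, e1, e2, e3, real_inner_comm v x, real_inner_comm v (Bf a x),
    real_inner_comm v a]
  ring

lemma DHi_apply (a x v : E3) : DHi a x v = WH a v x := by
  simp [DHi, WH, ContinuousLinearMap.add_apply, ContinuousLinearMap.smul_apply,
    innerSL_apply_apply, smul_eq_mul]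

set_option maxHeartbeats 1000000 in
lemma lapl_W_sum (ha : ‖a‖ < 1) (hx : 0 < Qi a x) :
    ∑ i : Fin 3, fderiv ℝ (fun y => WH a (EuclideanSpace.single i 1) y) x
      (EuclideanSpace.single i 1) = 0 := by
  have hq0 : Qi a x ≠ 0 := hx.ne'
  have hp0 : Pf a x ≠ 0 := (Pf_pos hx).ne'
  have hs0 : scn a ≠ 0 := (scn_pos ha).ne'
  have hQ := hasFDerivAt_Qi a x
  have hP := hasFDerivAt_Pf a hx
  have hss : HasFDerivAt (fun y : E3 => ⟪y,y⟫) _ x :=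
    (hasFDerivAt_id x).inner ℝ (hasFDerivAt_id x)
  have hQinv : HasFDerivAt (fun y => (Qi a y)⁻¹) _ x :=
    (hasDerivAt_inv hx.ne').comp_hasFDerivAt x hQ
  have hQ2inv := HasFDerivAt.mul (𝕜 := ℝ) hQinv hQinv
  have hQ3inv := HasFDerivAt.mul (𝕜 := ℝ) hQ2inv hQinv
  have hBf : HasFDerivAt (Bf a) ((‖a‖^2 : ℝ) • ContinuousLinearMap.id ℝ E3) x :=
    ((hasFDerivAt_id (𝕜 := ℝ) x).const_smul (‖a‖^2)).sub_const a
  have hm : HasFDerivAt (mfun a) _ x :=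
    (hss.const_mul (‖a‖^2)).sub ((hasFDerivAt_const a x).inner ℝ (hasFDerivAt_id x))
  have he1 : HasFDerivAt (e1 a) _ x :=
    ((hP.mul hQ2inv).const_mul (-(kk a))).add
      ((hm.const_mul (3*scn a)).mul (hP.mul hQ3inv))
  have he2 : HasFDerivAt (e2 a) _ x := (hP.mul hQ2inv).const_mul (-(2*‖a‖^2*scn a))
  have he3 : HasFDerivAt (e3 a) _ x := (hP.mul hQ2inv).const_mul (scn a)
  have hsum : ∀ v : E3, HasFDerivAt (fun y => WH a v y) _ x := fun v =>
    ((he1.mul (hBf.inner ℝ (hasFDerivAt_const v x))).add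
      (he2.mul ((hasFDerivAt_id x).inner ℝ (hasFDerivAt_const v x)))).add
      (he3.mul_const (⟪a, v⟫))
  have summand : ∀ v : E3, fderiv ℝ (fun y => WH a v y) x v
      = (‖a‖^2 * e1 a x + e2 a x) * ⟪v,v⟫
        + (3*kk a*Pf a x*((Qi a x)⁻¹*(Qi a x)⁻¹*(Qi a x)⁻¹)
           - 15*scn a*mfun a x*Pf a x*((Qi a x)⁻¹*(Qi a x)⁻¹*(Qi a x)⁻¹*(Qi a x)⁻¹))
          * (⟪Bf a x, v⟫ * ⟪Bf a x, v⟫)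
        + (12*‖a‖^2*scn a*Pf a x*((Qi a x)⁻¹*(Qi a x)⁻¹*(Qi a x)⁻¹))
          * (⟪x, v⟫ * ⟪Bf a x, v⟫)
        + (-(6*scn a*Pf a x*((Qi a x)⁻¹*(Qi a x)⁻¹*(Qi a x)⁻¹)))
          * (⟪a, v⟫ * ⟪Bf a x, v⟫) := by
    intro v
    rw [(hsum v).fderiv]
    simp only [ContinuousLinearMap.add_apply, ContinuousLinearMap.smul_apply, Pi.mul_apply,
      ContinuousLinearMap.sub_apply, ContinuousLinearMap.coe_comp', Function.comp_apply,
      ContinuousLinearMap.prod_apply, ContinuousLinearMap.coe_id', id_eq,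
      fderivInnerCLM_apply, innerSL_apply_apply, smul_eq_mul, ContinuousLinearMap.coe_smul',
      Pi.smul_apply, ContinuousLinearMap.neg_apply, ContinuousLinearMap.zero_apply,
      real_inner_comm v x, real_inner_comm v (Bf a x), real_inner_comm v a,
      inner_zero_right, inner_zero_left, real_inner_smul_left]
    ring
  calc ∑ i : Fin 3, fderiv ℝ (fun y => WH a (EuclideanSpace.single i 1) y) x
        (EuclideanSpace.single i 1)
      = ∑ i : Fin 3,
        ((‖a‖^2 * e1 a x + e2 a x) * ⟪(EuclideanSpace.single i 1 : E3), EuclideanSpace.single i 1⟫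
        + (3*kk a*Pf a x*((Qi a x)⁻¹*(Qi a x)⁻¹*(Qi a x)⁻¹)
           - 15*scn a*mfun a x*Pf a x*((Qi a x)⁻¹*(Qi a x)⁻¹*(Qi a x)⁻¹*(Qi a x)⁻¹))
          * (⟪Bf a x, EuclideanSpace.single i 1⟫ * ⟪Bf a x, EuclideanSpace.single i 1⟫)
        + (12*‖a‖^2*scn a*Pf a x*((Qi a x)⁻¹*(Qi a x)⁻¹*(Qi a x)⁻¹))
          * (⟪x, EuclideanSpace.single i 1⟫ * ⟪Bf a x, EuclideanSpace.single i 1⟫)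
        + (-(6*scn a*Pf a x*((Qi a x)⁻¹*(Qi a x)⁻¹*(Qi a x)⁻¹)))
          * (⟪a, EuclideanSpace.single i 1⟫ * ⟪Bf a x, EuclideanSpace.single i 1⟫)) :=
        Finset.sum_congr rfl fun i _ => summand _
    _ = 0 := by
        simp only [Finset.sum_add_distrib, ← Finset.mul_sum, sum_inner_single,
          sum_single_single]
        rw [hBB, hxB, haB]
        simp only [e1, e2, e3, kk, mfun, Qi] at hq0 ⊢
        set s := (⟪x,x⟫:ℝ) with hsdef
        set t := (⟪a,x⟫:ℝ) with htdef
        field_simp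
        ring

def U0 (a : E3) : E3 → ℝ := fun x =>
  Real.sqrt ((‖a‖ ^ 2 * ‖x‖ ^ 2 - 2 * ⟪a, x⟫ + 1) / (1 - ‖a‖ ^ 2)) -
    (1 - ‖x‖ ^ 2) / 4 *
      Real.sqrt ((1 - ‖a‖ ^ 2) / (‖a‖ ^ 2 * ‖x‖ ^ 2 - 2 * ⟪a, x⟫ + 1))

lemma U0_eq_UU (ha : ‖a‖ < 1) (hx : 0 < Qi a x) : U0 a x = UU a x := U_eq_UU ha hx

lemma lapl_U0_eq (ha : ‖a‖ < 1) (hx : 0 < Qi a x) : lapl (U0 a) x = Hi a x := by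
  have h0 : lapl (U0 a) x = lapl (UU a) x :=
    lapl_congr ((ev_pos hx).mono fun y hy => U0_eq_UU ha hy)
  rw [h0]
  unfold lapl
  calc ∑ i : Fin 3, fderiv ℝ (fun y => fderiv ℝ (UU a) y (EuclideanSpace.single i 1)) x
        (EuclideanSpace.single i 1)
      = ∑ i : Fin 3, fderiv ℝ (fun y => Vf a (EuclideanSpace.single i 1) y) x
        (EuclideanSpace.single i 1) := by
        refine Finset.sum_congr rfl fun i _ => ?_
        have h2 : (fun y => fderiv ℝ (UU a) y (EuclideanSpace.single i 1))
            =ᶠ[nhds x] (fun y => Vf a (EuclideanSpace.single i 1) y) := by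
          filter_upwards [ev_pos hx] with y hy
          rw [(hasFDerivAt_UU hy).fderiv, DUU_apply]
        rw [h2.fderiv_eq]
    _ = Hi a x := lapl_V_sum ha hx

lemma lapl_lapl_U0 (ha : ‖a‖ < 1) (hx : 0 < Qi a x) : lapl (lapl (U0 a)) x = 0 := by
  have h0 : lapl (lapl (U0 a)) x = lapl (Hi a) x :=
    lapl_congr ((ev_pos hx).mono fun y hy => lapl_U0_eq ha hy)
  rw [h0]
  unfold lapl
  calc ∑ i : Fin 3, fderiv ℝ (fun y => fderiv ℝ (Hi a) y (EuclideanSpace.single i 1)) x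
        (EuclideanSpace.single i 1)
      = ∑ i : Fin 3, fderiv ℝ (fun y => WH a (EuclideanSpace.single i 1) y) x
        (EuclideanSpace.single i 1) := by
        refine Finset.sum_congr rfl fun i _ => ?_
        have h2 : (fun y => fderiv ℝ (Hi a) y (EuclideanSpace.single i 1))
            =ᶠ[nhds x] (fun y => WH a (EuclideanSpace.single i 1) y) := by
          filter_upwards [ev_pos hx] with y hy
          rw [(hasFDerivAt_Hi ha hy).fderiv, DHi_apply]
        rw [h2.fderiv_eq]
    _ = 0 := lapl_W_sum ha hx

lemma U0_pos (ha : ‖a‖ < 1) (hx : ‖x‖ ≤ 1) : 0 < U0 a x := by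
  have hq : 0 < Qi a x := Qi_pos ha hx
  rw [U0_eq_UU ha hq]
  have key : 0 < Qi a x - (1-‖a‖^2)/4*(1-‖x‖^2) := by
    have key0 : Qi a x = (1-‖a‖^2)*(1-‖x‖^2) + ‖x-a‖^2 := by
      rw [Qi_eq, norm_sub_sq_real, real_inner_comm]; ring
    by_cases hxa : x = a
    · subst hxa
      have h0 : (0:ℝ) < 1-‖x‖^2 := by nlinarith [norm_nonneg x]
      have h2 : (0:ℝ) ≤ ‖x-x‖^2 := by positivity
      nlinarith
    · have h2 : 0 < ‖x-a‖^2 := pow_pos (norm_sub_pos_iff.mpr hxa) 2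
      have h0 : (0:ℝ) ≤ 1-‖x‖^2 := by nlinarith [norm_nonneg x]
      have h1 : (0:ℝ) < 1-‖a‖^2 := c_pos ha
      nlinarith
  have e : UU a x = Pf a x / (Qi a x * scn a) * (Qi a x - (1-‖a‖^2)/4*(1-‖x‖^2)) := by
    unfold UU
    rw [real_inner_self_eq_norm_sq, ← scn_sq ha]
    have hq0 : Qi a x ≠ 0 := hq.ne'
    have hs0 : scn a ≠ 0 := (scn_pos ha).ne'
    field_simp
    ring
  rw [e]
  exact mul_pos (div_pos (Pf_pos hq) (mul_pos hq (scn_pos ha))) key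

lemma U0_rad (ha : ‖a‖ < 1) (hx : ‖x‖ = 1) :
    deriv (fun t : ℝ => U0 a (t • x)) 1 = U0 a x / 2 := by
  set τ := (⟪a,x⟫:ℝ) with hτ
  set α := ‖a‖^2 with hα
  have hfun : (fun t : ℝ => U0 a (t • x)) = fun t : ℝ =>
      Real.sqrt ((α * t^2 - 2 * (t*τ) + 1) / (1 - α)) -
        (1 - t^2) / 4 * Real.sqrt ((1 - α) / (α * t^2 - 2 * (t*τ) + 1)) := by
    funext t
    have h1 : ‖t • x‖^2 = t^2 := by
      rw [norm_smul, hx, mul_one, Real.norm_eq_abs, sq_abs]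
    have h2 : (⟪a, t • x⟫:ℝ) = t * τ := by rw [real_inner_smul_right]
    simp only [U0, h1, h2, ← hα]
  rw [hfun]
  have hq : (0:ℝ) < α * 1^2 - 2 * (1*τ) + 1 := by
    have := Qi_pos ha hx.le; rw [Qi_eq a x, hx] at this; simpa using by
      convert this using 1; ring
  set Q := α * 1^2 - 2 * (1*τ) + 1 with hQ
  have hc : (0:ℝ) < 1 - α := c_pos ha
  have hg : HasDerivAt (fun t : ℝ => α * t^2 - 2 * (t*τ) + 1) (2*α - 2*τ) 1 := by
    have h := (((hasDerivAt_pow 2 (1:ℝ)).const_mul α).sub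
      (((hasDerivAt_id (1:ℝ)).mul_const τ).const_mul 2)).add_const 1
    refine h.congr_deriv ?_
    push_cast
    ring
  have h2 : HasDerivAt (fun t : ℝ => Real.sqrt ((α * t^2 - 2 * (t*τ) + 1) / (1 - α)))
      (1 / (2 * Real.sqrt (Q / (1-α))) * ((2*α - 2*τ)/(1-α))) 1 := by
    have hdiv := hg.div_const (1-α)
    have hne : Q / (1-α) ≠ 0 := (div_pos hq hc).ne'
    exact (Real.hasDerivAt_sqrt hne).comp 1 hdiv
  have h3 : HasDerivAt (fun t : ℝ => (1 - α) / (α * t^2 - 2 * (t*τ) + 1))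
      ((0 * Q - (1-α) * (2*α - 2*τ)) / Q^2) 1 :=
    (hasDerivAt_const 1 (1-α)).div hg hq.ne'
  have h4 : HasDerivAt (fun t : ℝ => Real.sqrt ((1 - α) / (α * t^2 - 2 * (t*τ) + 1)))
      (1 / (2 * Real.sqrt ((1-α)/Q)) * ((0 * Q - (1-α) * (2*α - 2*τ)) / Q^2)) 1 := by
    have hne : (1-α) / Q ≠ 0 := (div_pos hc hq).ne'
    exact (Real.hasDerivAt_sqrt hne).comp 1 h3
  have h5 : HasDerivAt (fun t : ℝ => (1 - t^2)/4) (-(1:ℝ)/2) 1 := by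
    have h := ((hasDerivAt_pow 2 (1:ℝ)).const_sub 1).div_const 4
    refine h.congr_deriv ?_
    norm_num
  have htot := h2.sub (h5.mul h4)
  erw [htot.deriv]
  have hx2 : ‖x‖^2 = 1 := by rw [hx]; norm_num
  have hU0 : U0 a x = Real.sqrt (Q / (1-α)) := by
    simp only [U0, hx2, ← hα, ← hτ]
    rw [show ‖a‖^2*1 - 2*τ + 1 = Q by rw [hQ]; ring]
    norm_num
  rw [hU0]
  have hsq : Real.sqrt (Q/(1-α)) = Real.sqrt Q / Real.sqrt (1-α) := Real.sqrt_div hq.le _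
  have hsc : Real.sqrt ((1-α)/Q) = Real.sqrt (1-α) / Real.sqrt Q := Real.sqrt_div hc.le _
  have hQs : Real.sqrt Q ^ 2 = Q := Real.sq_sqrt hq.le
  have hCs : Real.sqrt (1-α) ^ 2 = 1 - α := Real.sq_sqrt hc.le
  have hQ0 : Real.sqrt Q ≠ 0 := (Real.sqrt_pos.mpr hq).ne'
  have hC0 : Real.sqrt (1-α) ≠ 0 := (Real.sqrt_pos.mpr hc).ne'
  rw [hsq, hsc]
  field_simp
  rw [hCs, hQs, hQ]
  ring

end Stmt17Aux

/-- for `a ∈ B³`, the function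
`U_a(x) = √((|a|²|x|²-2a·x+1)/(1-|a|²)) - ((1-|x|²)/4)√((1-|a|²)/(|a|²|x|²-2a·x+1))`
is biharmonic on the closed unit ball, positive there, and satisfies `∂U_a/∂r = U_a/2` on `S²`. -/
theorem stmt17 (a : EuclideanSpace ℝ (Fin 3)) (ha : ‖a‖ < 1) :
    let U : EuclideanSpace ℝ (Fin 3) → ℝ := fun x =>
      Real.sqrt ((‖a‖ ^ 2 * ‖x‖ ^ 2 - 2 * ⟪a, x⟫ + 1) / (1 - ‖a‖ ^ 2)) -
        (1 - ‖x‖ ^ 2) / 4 *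
          Real.sqrt ((1 - ‖a‖ ^ 2) / (‖a‖ ^ 2 * ‖x‖ ^ 2 - 2 * ⟪a, x⟫ + 1))
    (∀ x : EuclideanSpace ℝ (Fin 3), ‖x‖ ≤ 1 → lapl (lapl U) x = 0) ∧
    (∀ x : EuclideanSpace ℝ (Fin 3), ‖x‖ ≤ 1 → 0 < U x) ∧
    (∀ x : EuclideanSpace ℝ (Fin 3), ‖x‖ = 1 →
      deriv (fun t : ℝ => U (t • x)) 1 = U x / 2) := by
  intro U
  have hU : U = U0 a := rfl
  rw [hU]
  exact ⟨fun x hx => lapl_lapl_U0 ha (Qi_pos ha hx),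
    fun x hx => U0_pos ha hx,
    fun x hx => U0_rad ha hx⟩
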